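/- arXiv:2504.18597 — 3 statements merged into one kernel-verified Lean document; each statement's English description precedes it below -/
import Mathlib

section
/- Let n ≥ 1, let ω and ω' be two (not necessarily distinct) complex roots of x^n + 1, and let a|_0, …, a|_{n−1} be independent real random variables with E[a|_j] = 0 and E[(a|_j)^2] = V for all j. Define the complex random variables Z = Σ_{j=0}^{n−1} a|_j ω^j and Z' = Σ_{j=0}^{n−1} a|_j ω'^j. Then E[Z · Z'] = n·V if ω·ω' = 1, and E[Z · Z'] = 0 otherwise. -/
open MeasureTheory ProbabilityTheory
open scoped NNReal ENNReal

/-- Let `ω, ω'` be complex roots of `x^n + 1` and let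
`a|_0, …, a|_{n-1}` be independent real random variables with mean `0` and second
moment `V`. With `Z = Σ_j a|_j ω^j` and `Z' = Σ_j a|_j ω'^j`, we have
`E[Z·Z'] = n·V` if `ω·ω' = 1` and `E[Z·Z'] = 0` otherwise. -/
theorem stmt4 {Ω : Type*} [MeasurableSpace Ω] (μ : Measure Ω) [IsProbabilityMeasure μ]
    (n : ℕ) (hn : 1 ≤ n) (w w' : ℂ)
    (hw : w ^ n + 1 = 0) (hw' : w' ^ n + 1 = 0)
    (V : ℝ) (a : Fin n → Ω → ℝ)
    (hmeas : ∀ j, Measurable (a j))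
    (hindep : iIndepFun a μ)
    (hint : ∀ j, Integrable (a j) μ)
    (hint2 : ∀ j, Integrable (fun ω => (a j ω) ^ 2) μ)
    (hmean : ∀ j, (∫ ω, a j ω ∂μ) = 0)
    (hvar : ∀ j, (∫ ω, (a j ω) ^ 2 ∂μ) = V) :
    (∫ ω, (∑ j : Fin n, (a j ω : ℂ) * w ^ (j : ℕ)) *
        (∑ j : Fin n, (a j ω : ℂ) * w' ^ (j : ℕ)) ∂μ)
      = if w * w' = 1 then (n : ℂ) * (V : ℂ) else 0 := by
  -- integrability of products
  have hintmul : ∀ i j : Fin n, Integrable (fun ω => a i ω * a j ω) μ := by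
    intro i j
    rcases eq_or_ne i j with rfl | hij
    · simpa [sq] using hint2 i
    · exact (hindep.indepFun hij).integrable_mul (hint i) (hint j)
  have key : ∀ i j : Fin n, (∫ ω, a i ω * a j ω ∂μ) = if i = j then V else 0 := by
    intro i j
    rcases eq_or_ne i j with rfl | hij
    · simpa [sq] using hvar i
    · rw [if_neg hij]
      have := (hindep.indepFun hij).integral_mul_eq_mul_integral (hint i).aestronglyMeasurable (hint j).aestronglyMeasurable
      simpa [Pi.mul_apply, hmean] using this
  -- rewrite integrand as double sum
  have hre : (∫ ω, (∑ j : Fin n, (a j ω : ℂ) * w ^ (j : ℕ)) *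
        (∑ j : Fin n, (a j ω : ℂ) * w' ^ (j : ℕ)) ∂μ)
      = ∑ i : Fin n, ∑ j : Fin n,
          ((∫ ω, a i ω * a j ω ∂μ : ℝ) : ℂ) * (w ^ (i : ℕ) * w' ^ (j : ℕ)) := by
    have h1 : ∀ ω : Ω, (∑ j : Fin n, (a j ω : ℂ) * w ^ (j : ℕ)) *
        (∑ j : Fin n, (a j ω : ℂ) * w' ^ (j : ℕ))
        = ∑ i : Fin n, ∑ j : Fin n,
            ((a i ω * a j ω : ℝ) : ℂ) * (w ^ (i : ℕ) * w' ^ (j : ℕ)) := by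
      intro ω
      rw [Finset.sum_mul_sum]
      refine Finset.sum_congr rfl fun i _ => Finset.sum_congr rfl fun j _ => ?_
      push_cast
      ring
    simp_rw [h1]
    rw [integral_finset_sum]
    · refine Finset.sum_congr rfl fun i _ => ?_
      rw [integral_finset_sum]
      · refine Finset.sum_congr rfl fun j _ => ?_
        rw [integral_mul_const]
        congr 1
        exact integral_ofReal (𝕜 := ℂ)
      · intro j _
        exact (((hintmul i j).ofReal (𝕜 := ℂ)).mul_const _)
    · intro i _
      exact integrable_finset_sum _ fun j _ =>
        (((hintmul i j).ofReal (𝕜 := ℂ)).mul_const _)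
  rw [hre]
  have hsimp : ∑ i : Fin n, ∑ j : Fin n,
      ((∫ ω, a i ω * a j ω ∂μ : ℝ) : ℂ) * (w ^ (i : ℕ) * w' ^ (j : ℕ))
      = (V : ℂ) * ∑ j : Fin n, (w * w') ^ (j : ℕ) := by
    simp_rw [key]
    rw [Finset.mul_sum]
    refine Finset.sum_congr rfl fun i _ => ?_
    rw [Finset.sum_eq_single i]
    · simp [mul_pow]
    · intro j _ hij
      simp [Ne.symm hij]
    · simp
  rw [hsimp]
  have hu : (w * w') ^ n = 1 := by
    have h1 : w ^ n = -1 := by linear_combination hw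
    have h2 : w' ^ n = -1 := by linear_combination hw'
    rw [mul_pow, h1, h2]; ring
  by_cases h : w * w' = 1
  · rw [if_pos h]
    simp [h, Finset.sum_const, mul_comm]
  · rw [if_neg h]
    have : ∑ j : Fin n, (w * w') ^ (j : ℕ) = 0 := by
      rw [Fin.sum_univ_eq_sum_range, geom_sum_eq h, hu]
      simp
    rw [this, mul_zero]
end

section
/- Let n ≥ 1 and let I, K ≥ 0 be integers. Let {b_μ(ι) : 0 ≤ μ ≤ K, 0 ≤ ι ≤ I} and {b'_μ(ι) : 0 ≤ μ ≤ K, 0 ≤ ι ≤ I} be two families of random polynomials in R_n, with the two families independent of each other and all coefficients having finite moments of every order. Assume each family satisfies: E[b_μ(ι)|_j] = 0 for all μ, ι, j, and Cov(b_{μ1}(ι1)|_{j1}, b_{μ2}(ι2)|_{j2}) = 0 whenever μ1 ≠ μ2 or j1 ≠ j2 (for all ι1, ι2); and likewise for the primed family. Define, for 0 ≤ μ ≤ 2K and 0 ≤ ι ≤ 2I, b^{mul}_μ(ι) = Σ_{ι1+ι2=ι} Σ_{μ1+μ2=μ} b_{μ1}(ι1) · b'_{μ2}(ι2), the products computed in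 R_n. Then E[b^{mul}_μ(ι)|_i] = 0 for all μ, ι, i, and Cov(b^{mul}_{μ1}(ι1)|_{i1}, b^{mul}_{μ2}(ι2)|_{i2}) = 0 whenever μ1 ≠ μ2 or i1 ≠ i2 (for all ι1, ι2). -/
open MeasureTheory ProbabilityTheory Polynomial
open scoped NNReal ENNReal

/-- The polynomial in `ℝ[x]` of degree `< n` with coefficients `c 0, …, c (n-1)`;
it is the canonical representative of an element of `R_n = ℝ[x]/(x^n+1)`. -/
noncomputable def polyOf (n : ℕ) (c : Fin n → ℝ) : Polynomial ℝ :=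
  ∑ j : Fin n, Polynomial.C (c j) * Polynomial.X ^ (j : ℕ)

/-- The `i`-th coefficient of the unique representative of degree `< n` of
`p mod (x^n + 1)`, i.e. the `i`-th coefficient of the image of `p` in `R_n`. -/
noncomputable def redCoeff (n : ℕ) (p : Polynomial ℝ) (i : ℕ) : ℝ :=
  (p %ₘ (Polynomial.X ^ n + 1)).coeff i

/-- Covariance of two real random variables. -/
noncomputable def cov {Ω : Type*} [MeasurableSpace Ω] (P : Measure Ω) (X Y : Ω → ℝ) : ℝ :=
  ∫ ω, (X ω - ∫ ω', X ω' ∂P) * (Y ω - ∫ ω', Y ω' ∂P) ∂P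

/-- The `i`-th coefficient of
`b^{mul}_μ(ι) = Σ_{ι1+ι2=ι} Σ_{μ1+μ2=μ} b_{μ1}(ι1)·b'_{μ2}(ι2)`
(products computed in `R_n`), where `(ι1, ι2)` and `(μ1, μ2)` range over pairs of
nonnegative integers `≤ I` resp. `≤ K` with sums `ι` resp. `μ`. -/
noncomputable def bmulCoeff {Ω : Type*} (n I K : ℕ)
    (b b' : Fin (I + 1) → Fin (K + 1) → Fin n → Ω → ℝ)
    (ι μ : ℕ) (i : Fin n) (ω : Ω) : ℝ :=
  ∑ ι1 : Fin (I + 1), ∑ ι2 : Fin (I + 1), ∑ μ1 : Fin (K + 1), ∑ μ2 : Fin (K + 1),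
    if (ι1 : ℕ) + (ι2 : ℕ) = ι ∧ (μ1 : ℕ) + (μ2 : ℕ) = μ then
      redCoeff n (polyOf n (fun j => b ι1 μ1 j ω) * polyOf n (fun j => b' ι2 μ2 j ω)) i
    else 0

/-! ### Auxiliary definitions and lemmas -/

/-- Index type for the fully expanded form of `bmulCoeff`. -/
abbrev TT (n I K : ℕ) :=
  (Fin (I + 1) × Fin (I + 1)) × (Fin (K + 1) × Fin (K + 1)) × (Fin n × Fin n)

/-- The deterministic coefficient appearing in the expansion of `bmulCoeff`. -/
noncomputable def auxC (n I K : ℕ) (ι μ : ℕ) (i : Fin n) (t : TT n I K) : ℝ :=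
  if (t.1.1 : ℕ) + (t.1.2 : ℕ) = ι ∧ (t.2.1.1 : ℕ) + (t.2.1.2 : ℕ) = μ then
    redCoeff n (Polynomial.X ^ (t.2.2.1 : ℕ) * Polynomial.X ^ (t.2.2.2 : ℕ)) i
  else 0

lemma monic_XnAddOne (n : ℕ) (hn : 1 ≤ n) : ((Polynomial.X : Polynomial ℝ) ^ n + 1).Monic := by
  have := Polynomial.monic_X_pow_add_C (R := ℝ) (1 : ℝ) (by omega : n ≠ 0)
  simpa using this

/-- `X^m mod (X^n+1)` is a scalar multiple of `X^(m % n)`. -/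
lemma modX (n : ℕ) (hn : 1 ≤ n) (m : ℕ) :
    ∃ s : ℝ, (Polynomial.X : Polynomial ℝ) ^ m %ₘ (Polynomial.X ^ n + 1)
      = Polynomial.C s * Polynomial.X ^ (m % n) := by
  induction m using Nat.strong_induction_on with
  | _ m ih =>
    by_cases h : m < n
    · refine ⟨1, ?_⟩
      rw [Nat.mod_eq_of_lt h, map_one, one_mul]
      apply (Polynomial.modByMonic_eq_self_iff (monic_XnAddOne n hn)).2
      have h1 : ((Polynomial.X : Polynomial ℝ) ^ n + 1) = Polynomial.X ^ n + Polynomial.C 1 := by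
        rw [map_one]
      rw [h1, Polynomial.degree_X_pow_add_C (by omega : 0 < n), Polynomial.degree_X_pow]
      exact_mod_cast h
    · push_neg at h
      obtain ⟨s, hs⟩ := ih (m - n) (by omega)
      refine ⟨-s, ?_⟩
      have hm : m - n + n = m := by omega
      have key : (Polynomial.X : Polynomial ℝ) ^ m
          = Polynomial.X ^ (m - n) * (Polynomial.X ^ n + 1) + (-(Polynomial.X ^ (m - n))) := by
        rw [mul_add, mul_one, ← pow_add, hm]; ring
      rw [key, Polynomial.add_modByMonic, Polynomial.neg_modByMonic, hs,
        (Polynomial.modByMonic_eq_zero_iff_dvd (monic_XnAddOne n hn)).2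
          (Dvd.intro_left _ rfl),
        zero_add, Nat.mod_eq_sub_mod h, map_neg, neg_mul]

/-- Orthogonality of the deterministic coefficients at distinct indices. -/
lemma redCoeff_orth (n : ℕ) (hn : 1 ≤ n) (i1 i2 : Fin n) (h : i1 ≠ i2) (j k : Fin n) :
    redCoeff n (Polynomial.X ^ (j : ℕ) * Polynomial.X ^ (k : ℕ)) i1 *
      redCoeff n (Polynomial.X ^ (j : ℕ) * Polynomial.X ^ (k : ℕ)) i2 = 0 := by
  obtain ⟨s, hs⟩ := modX n hn ((j : ℕ) + (k : ℕ))
  unfold redCoeff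
  rw [← pow_add, hs]
  simp only [Polynomial.coeff_C_mul, Polynomial.coeff_X_pow]
  by_cases h1 : (i1 : ℕ) = ((j : ℕ) + (k : ℕ)) % n
  · by_cases h2 : (i2 : ℕ) = ((j : ℕ) + (k : ℕ)) % n
    · exact absurd (Fin.ext (h1.trans h2.symm)) h
    · simp [h2]
  · simp [h1]

/-- Bilinear expansion of `redCoeff` of a product of `polyOf`s. -/
lemma redCoeff_polyOf_mul (n : ℕ) (c d : Fin n → ℝ) (i : ℕ) :
    redCoeff n (polyOf n c * polyOf n d) i
      = ∑ j : Fin n, ∑ k : Fin n,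
          redCoeff n (Polynomial.X ^ (j : ℕ) * Polynomial.X ^ (k : ℕ)) i * (c j * d k) := by
  unfold redCoeff polyOf
  rw [Finset.sum_mul_sum]
  have hsum : ∀ (f : Fin n → Polynomial ℝ),
      (∑ x : Fin n, f x) %ₘ (Polynomial.X ^ n + 1)
        = ∑ x : Fin n, f x %ₘ (Polynomial.X ^ n + 1) := fun f => by
    exact map_sum (Polynomial.modByMonicHom (Polynomial.X ^ n + 1)) f Finset.univ
  rw [hsum, Polynomial.finset_sum_coeff]
  refine Finset.sum_congr rfl fun j _ => ?_
  rw [hsum, Polynomial.finset_sum_coeff]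
  refine Finset.sum_congr rfl fun k _ => ?_
  have hre : (Polynomial.C (c j) * Polynomial.X ^ (j : ℕ)) *
      (Polynomial.C (d k) * Polynomial.X ^ (k : ℕ))
      = (c j * d k) • (Polynomial.X ^ (j : ℕ) * Polynomial.X ^ (k : ℕ)) := by
    rw [Polynomial.smul_eq_C_mul, map_mul]; ring
  rw [hre, Polynomial.smul_modByMonic, Polynomial.coeff_smul, smul_eq_mul, mul_comm]

/-- Full expansion of `bmulCoeff` as a linear combination of products `b·b'`. -/
lemma bmul_expand {Ω : Type*} (n I K : ℕ)
    (b b' : Fin (I + 1) → Fin (K + 1) → Fin n → Ω → ℝ)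
    (ι μ : ℕ) (i : Fin n) (ω : Ω) :
    bmulCoeff n I K b b' ι μ i ω
      = ∑ t : TT n I K, auxC n I K ι μ i t *
          (b t.1.1 t.2.1.1 t.2.2.1 ω * b' t.1.2 t.2.1.2 t.2.2.2 ω) := by
  unfold bmulCoeff auxC
  rw [Fintype.sum_prod_type]
  simp only [Fintype.sum_prod_type]
  refine Finset.sum_congr rfl fun ι1 _ => Finset.sum_congr rfl fun ι2 _ =>
    Finset.sum_congr rfl fun μ1 _ => Finset.sum_congr rfl fun μ2 _ => ?_
  by_cases hc : (ι1 : ℕ) + (ι2 : ℕ) = ι ∧ (μ1 : ℕ) + (μ2 : ℕ) = μ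
  · rw [if_pos hc, redCoeff_polyOf_mul n (fun j => b ι1 μ1 j ω) (fun j => b' ι2 μ2 j ω) i]
    exact Finset.sum_congr rfl fun j _ => Finset.sum_congr rfl fun k _ => by
      rw [if_pos hc]
  · rw [if_neg hc]
    symm
    refine Finset.sum_eq_zero fun j _ => Finset.sum_eq_zero fun k _ => ?_
    rw [if_neg hc, zero_mul]

/-- If `f, g ∈ L²`, then `f·g` is integrable. -/
lemma integrable_mul_of_memL2 {Ω : Type*} [MeasurableSpace Ω] {P : Measure Ω}
    {f g : Ω → ℝ} (hf : MemLp f 2 P) (hg : MemLp g 2 P) :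
    Integrable (fun ω => f ω * g ω) P := by
  have h : (1 : ℝ≥0∞) / 1 = 1 / 2 + 1 / 2 := by
    rw [ENNReal.add_halves, one_div_one]
  haveI : ENNReal.HolderTriple 2 2 1 := ⟨by rw [inv_one, ENNReal.inv_two_add_inv_two]⟩
  have := (MemLp.smul (𝕜 := ℝ) (r := 1) hg hf)
  rw [← memLp_one_iff_integrable]
  exact this

/-- The coefficients of the product family
`b^{mul}_μ(ι) = Σ_{ι1+ι2=ι} Σ_{μ1+μ2=μ} b_{μ1}(ι1)·b'_{μ2}(ι2)` are again centered,
and uncorrelated whenever `μ1 ≠ μ2` or `i1 ≠ i2`. -/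
theorem stmt9 {Ω : Type*} [MeasurableSpace Ω] (P : Measure Ω) [IsProbabilityMeasure P]
    (n : ℕ) (hn : 1 ≤ n) (I K : ℕ)
    (b b' : Fin (I + 1) → Fin (K + 1) → Fin n → Ω → ℝ)
    -- measurability and finite moments of every order for all coefficients
    (hbmeas : ∀ ι μ j, Measurable (b ι μ j))
    (hb'meas : ∀ ι μ j, Measurable (b' ι μ j))
    (hbmom : ∀ ι μ j (p : ℕ), Integrable (fun ω => (b ι μ j ω) ^ p) P)
    (hb'mom : ∀ ι μ j (p : ℕ), Integrable (fun ω => (b' ι μ j ω) ^ p) P)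
    -- the two families are independent of each other
    (hindep : IndepFun
      (fun ω (q : Fin (I + 1) × Fin (K + 1) × Fin n) => b q.1 q.2.1 q.2.2 ω)
      (fun ω (q : Fin (I + 1) × Fin (K + 1) × Fin n) => b' q.1 q.2.1 q.2.2 ω) P)
    -- each family is centered with the stated vanishing covariances
    (hbmean : ∀ ι μ j, (∫ ω, b ι μ j ω ∂P) = 0)
    (hb'mean : ∀ ι μ j, (∫ ω, b' ι μ j ω ∂P) = 0)
    (hbcov : ∀ ι1 ι2 μ1 μ2 j1 j2, (μ1 ≠ μ2 ∨ j1 ≠ j2) →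
      cov P (b ι1 μ1 j1) (b ι2 μ2 j2) = 0)
    (hb'cov : ∀ ι1 ι2 μ1 μ2 j1 j2, (μ1 ≠ μ2 ∨ j1 ≠ j2) →
      cov P (b' ι1 μ1 j1) (b' ι2 μ2 j2) = 0) :
    (∀ (ι μ : ℕ), ι ≤ 2 * I → μ ≤ 2 * K → ∀ i : Fin n,
      (∫ ω, bmulCoeff n I K b b' ι μ i ω ∂P) = 0) ∧
    (∀ (ι1 ι2 μ1 μ2 : ℕ), ι1 ≤ 2 * I → ι2 ≤ 2 * I → μ1 ≤ 2 * K → μ2 ≤ 2 * K →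
      ∀ i1 i2 : Fin n, (μ1 ≠ μ2 ∨ i1 ≠ i2) →
      cov P (bmulCoeff n I K b b' ι1 μ1 i1) (bmulCoeff n I K b b' ι2 μ2 i2) = 0) := by
  classical
  -- L² and L⁴-type facts
  have hbL2 : ∀ a p u, MemLp (b a p u) 2 P := fun a p u =>
    (memLp_two_iff_integrable_sq (hbmeas a p u).aestronglyMeasurable).2 (hbmom a p u 2)
  have hb'L2 : ∀ a p u, MemLp (b' a p u) 2 P := fun a p u =>
    (memLp_two_iff_integrable_sq (hb'meas a p u).aestronglyMeasurable).2 (hb'mom a p u 2)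
  have hbsqL2 : ∀ a p u, MemLp (fun ω => b a p u ω ^ 2) 2 P := fun a p u => by
    refine (memLp_two_iff_integrable_sq
      (((hbmeas a p u).pow measurable_const).aestronglyMeasurable)).2 ?_
    have : (fun ω => (b a p u ω ^ 2) ^ 2) = fun ω => b a p u ω ^ 4 := by
      funext ω; ring
    rw [this]; exact hbmom a p u 4
  have hb'sqL2 : ∀ a p u, MemLp (fun ω => b' a p u ω ^ 2) 2 P := fun a p u => by
    refine (memLp_two_iff_integrable_sq
      (((hb'meas a p u).pow measurable_const).aestronglyMeasurable)).2 ?_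
    have : (fun ω => (b' a p u ω ^ 2) ^ 2) = fun ω => b' a p u ω ^ 4 := by
      funext ω; ring
    rw [this]; exact hb'mom a p u 4
  have hbmulL2 : ∀ a1 p1 u1 a2 p2 u2,
      MemLp (fun ω => b a1 p1 u1 ω * b a2 p2 u2 ω) 2 P := fun a1 p1 u1 a2 p2 u2 => by
    refine (memLp_two_iff_integrable_sq
      (((hbmeas a1 p1 u1).mul (hbmeas a2 p2 u2)).aestronglyMeasurable)).2 ?_
    have : (fun ω => (b a1 p1 u1 ω * b a2 p2 u2 ω) ^ 2)
        = fun ω => (b a1 p1 u1 ω ^ 2) * (b a2 p2 u2 ω ^ 2) := by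
      funext ω; ring
    simp only [Pi.mul_apply]
    rw [this]
    exact integrable_mul_of_memL2 (hbsqL2 a1 p1 u1) (hbsqL2 a2 p2 u2)
  have hb'mulL2 : ∀ a1 p1 u1 a2 p2 u2,
      MemLp (fun ω => b' a1 p1 u1 ω * b' a2 p2 u2 ω) 2 P := fun a1 p1 u1 a2 p2 u2 => by
    refine (memLp_two_iff_integrable_sq
      (((hb'meas a1 p1 u1).mul (hb'meas a2 p2 u2)).aestronglyMeasurable)).2 ?_
    have : (fun ω => (b' a1 p1 u1 ω * b' a2 p2 u2 ω) ^ 2)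
        = fun ω => (b' a1 p1 u1 ω ^ 2) * (b' a2 p2 u2 ω ^ 2) := by
      funext ω; ring
    simp only [Pi.mul_apply]
    rw [this]
    exact integrable_mul_of_memL2 (hb'sqL2 a1 p1 u1) (hb'sqL2 a2 p2 u2)
  -- integrability of mixed products
  have hInt2 : ∀ a p u c r v, Integrable (fun ω => b a p u ω * b' c r v ω) P :=
    fun a p u c r v => integrable_mul_of_memL2 (hbL2 a p u) (hb'L2 c r v)
  have hInt4 : ∀ a1 p1 u1 a2 p2 u2 c1 r1 v1 c2 r2 v2,
      Integrable (fun ω => (b a1 p1 u1 ω * b a2 p2 u2 ω) *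
        (b' c1 r1 v1 ω * b' c2 r2 v2 ω)) P := fun a1 p1 u1 a2 p2 u2 c1 r1 v1 c2 r2 v2 =>
    integrable_mul_of_memL2 (hbmulL2 a1 p1 u1 a2 p2 u2) (hb'mulL2 c1 r1 v1 c2 r2 v2)
  -- independence of mixed products and factorization of integrals
  have hprod1 : ∀ a p u c r v, (∫ ω, b a p u ω * b' c r v ω ∂P) = 0 := by
    intro a p u c r v
    have hI : IndepFun (b a p u) (b' c r v) P :=
      hindep.comp (measurable_pi_apply (a, p, u)) (measurable_pi_apply (c, r, v))
    rw [IndepFun.integral_fun_mul_eq_mul_integral hI (hbmeas a p u).aestronglyMeasurable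
      (hb'meas c r v).aestronglyMeasurable, hbmean, zero_mul]
  have hprod2 : ∀ (a1 a2 : Fin (I + 1)) (p1 p2 : Fin (K + 1)) (u1 u2 : Fin n)
      (c1 c2 : Fin (I + 1)) (r1 r2 : Fin (K + 1)) (v1 v2 : Fin n),
      (∫ ω, (b a1 p1 u1 ω * b a2 p2 u2 ω) * (b' c1 r1 v1 ω * b' c2 r2 v2 ω) ∂P)
        = (∫ ω, b a1 p1 u1 ω * b a2 p2 u2 ω ∂P) *
          (∫ ω, b' c1 r1 v1 ω * b' c2 r2 v2 ω ∂P) := by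
    intro a1 a2 p1 p2 u1 u2 c1 c2 r1 r2 v1 v2
    have hφ : Measurable (fun v : (Fin (I + 1) × Fin (K + 1) × Fin n) → ℝ =>
        v (a1, p1, u1) * v (a2, p2, u2)) :=
      (measurable_pi_apply _).mul (measurable_pi_apply _)
    have hψ : Measurable (fun v : (Fin (I + 1) × Fin (K + 1) × Fin n) → ℝ =>
        v (c1, r1, v1) * v (c2, r2, v2)) :=
      (measurable_pi_apply _).mul (measurable_pi_apply _)
    have hI : IndepFun (fun ω => b a1 p1 u1 ω * b a2 p2 u2 ω)
        (fun ω => b' c1 r1 v1 ω * b' c2 r2 v2 ω) P := hindep.comp hφ hψ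
    exact IndepFun.integral_fun_mul_eq_mul_integral hI
      (((hbmeas a1 p1 u1).mul (hbmeas a2 p2 u2)).aestronglyMeasurable)
      (((hb'meas c1 r1 v1).mul (hb'meas c2 r2 v2)).aestronglyMeasurable)
  -- vanishing second moments within each family
  have hEb : ∀ a1 a2 p1 p2 u1 u2, (p1 ≠ p2 ∨ u1 ≠ u2) →
      (∫ ω, b a1 p1 u1 ω * b a2 p2 u2 ω ∂P) = 0 := by
    intro a1 a2 p1 p2 u1 u2 h
    have h0 := hbcov a1 a2 p1 p2 u1 u2 h
    unfold cov at h0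
    rw [hbmean, hbmean] at h0
    simpa using h0
  have hEb' : ∀ a1 a2 p1 p2 u1 u2, (p1 ≠ p2 ∨ u1 ≠ u2) →
      (∫ ω, b' a1 p1 u1 ω * b' a2 p2 u2 ω ∂P) = 0 := by
    intro a1 a2 p1 p2 u1 u2 h
    have h0 := hb'cov a1 a2 p1 p2 u1 u2 h
    unfold cov at h0
    rw [hb'mean, hb'mean] at h0
    simpa using h0
  -- integrability of the expansion terms
  have hTermInt : ∀ (ι μ : ℕ) (i : Fin n) (t : TT n I K),
      Integrable (fun ω => auxC n I K ι μ i t *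
        (b t.1.1 t.2.1.1 t.2.2.1 ω * b' t.1.2 t.2.1.2 t.2.2.2 ω)) P := fun ι μ i t =>
    (hInt2 _ _ _ _ _ _).const_mul _
  -- the mean of every coefficient of the product family vanishes
  have hmean : ∀ (ι μ : ℕ) (i : Fin n), (∫ ω, bmulCoeff n I K b b' ι μ i ω ∂P) = 0 := by
    intro ι μ i
    simp only [bmul_expand n I K b b' ι μ i]
    rw [integral_finset_sum _ (fun t _ => hTermInt ι μ i t)]
    refine Finset.sum_eq_zero fun t _ => ?_
    rw [integral_const_mul, hprod1, mul_zero]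
  refine ⟨fun ι μ _ _ i => hmean ι μ i, ?_⟩
  intro ι1 ι2 μ1 μ2 _ _ _ _ i1 i2 hne
  unfold cov
  rw [hmean ι1 μ1 i1, hmean ι2 μ2 i2]
  simp only [sub_zero]
  simp only [bmul_expand n I K b b' ι1 μ1 i1, bmul_expand n I K b b' ι2 μ2 i2,
    Finset.sum_mul_sum]
  rw [integral_finset_sum _ (fun t1 _ => integrable_finset_sum _ (fun t2 _ => by
    have hre : (fun ω => auxC n I K ι1 μ1 i1 t1 *
          (b t1.1.1 t1.2.1.1 t1.2.2.1 ω * b' t1.1.2 t1.2.1.2 t1.2.2.2 ω) *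
        (auxC n I K ι2 μ2 i2 t2 *
          (b t2.1.1 t2.2.1.1 t2.2.2.1 ω * b' t2.1.2 t2.2.1.2 t2.2.2.2 ω)))
        = fun ω => (auxC n I K ι1 μ1 i1 t1 * auxC n I K ι2 μ2 i2 t2) *
            ((b t1.1.1 t1.2.1.1 t1.2.2.1 ω * b t2.1.1 t2.2.1.1 t2.2.2.1 ω) *
             (b' t1.1.2 t1.2.1.2 t1.2.2.2 ω * b' t2.1.2 t2.2.1.2 t2.2.2.2 ω)) := by
      funext ω; ring
    rw [hre]
    exact (hInt4 _ _ _ _ _ _ _ _ _ _ _ _).const_mul _))]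
  refine Finset.sum_eq_zero fun t1 _ => ?_
  rw [integral_finset_sum _ (fun t2 _ => by
    have hre : (fun ω => auxC n I K ι1 μ1 i1 t1 *
          (b t1.1.1 t1.2.1.1 t1.2.2.1 ω * b' t1.1.2 t1.2.1.2 t1.2.2.2 ω) *
        (auxC n I K ι2 μ2 i2 t2 *
          (b t2.1.1 t2.2.1.1 t2.2.2.1 ω * b' t2.1.2 t2.2.1.2 t2.2.2.2 ω)))
        = fun ω => (auxC n I K ι1 μ1 i1 t1 * auxC n I K ι2 μ2 i2 t2) *
            ((b t1.1.1 t1.2.1.1 t1.2.2.1 ω * b t2.1.1 t2.2.1.1 t2.2.2.1 ω) *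
             (b' t1.1.2 t1.2.1.2 t1.2.2.2 ω * b' t2.1.2 t2.2.1.2 t2.2.2.2 ω)) := by
      funext ω; ring
    rw [hre]
    exact (hInt4 _ _ _ _ _ _ _ _ _ _ _ _).const_mul _)]
  refine Finset.sum_eq_zero fun t2 _ => ?_
  have hre : (fun ω => auxC n I K ι1 μ1 i1 t1 *
        (b t1.1.1 t1.2.1.1 t1.2.2.1 ω * b' t1.1.2 t1.2.1.2 t1.2.2.2 ω) *
      (auxC n I K ι2 μ2 i2 t2 *
        (b t2.1.1 t2.2.1.1 t2.2.2.1 ω * b' t2.1.2 t2.2.1.2 t2.2.2.2 ω)))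
      = fun ω => (auxC n I K ι1 μ1 i1 t1 * auxC n I K ι2 μ2 i2 t2) *
          ((b t1.1.1 t1.2.1.1 t1.2.2.1 ω * b t2.1.1 t2.2.1.1 t2.2.2.1 ω) *
           (b' t1.1.2 t1.2.1.2 t1.2.2.2 ω * b' t2.1.2 t2.2.1.2 t2.2.2.2 ω)) := by
    funext ω; ring
  rw [hre, integral_const_mul, hprod2]
  -- now show each individual term vanishes
  by_cases hb1 : t1.2.1.1 = t2.2.1.1 ∧ t1.2.2.1 = t2.2.2.1
  · by_cases hb2 : t1.2.1.2 = t2.2.1.2 ∧ t1.2.2.2 = t2.2.2.2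
    · -- both internal indices matched
      rcases hne with hμ | hi
      · -- μ1 ≠ μ2 forces one of the `if`s to be false
        unfold auxC
        by_cases hc1 : (t1.1.1 : ℕ) + (t1.1.2 : ℕ) = ι1 ∧
            (t1.2.1.1 : ℕ) + (t1.2.1.2 : ℕ) = μ1
        · have hc2 : ¬ ((t2.1.1 : ℕ) + (t2.1.2 : ℕ) = ι2 ∧
              (t2.2.1.1 : ℕ) + (t2.2.1.2 : ℕ) = μ2) := by
            rintro ⟨-, h2⟩
            exact hμ (by rw [← hc1.2, ← h2, hb1.1, hb2.1])
          rw [if_neg hc2, mul_zero, zero_mul]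
        · rw [if_neg hc1, zero_mul, zero_mul]
      · -- i1 ≠ i2: use orthogonality of the deterministic coefficients
        unfold auxC
        by_cases hc1 : (t1.1.1 : ℕ) + (t1.1.2 : ℕ) = ι1 ∧
            (t1.2.1.1 : ℕ) + (t1.2.1.2 : ℕ) = μ1
        · by_cases hc2 : (t2.1.1 : ℕ) + (t2.1.2 : ℕ) = ι2 ∧
              (t2.2.1.1 : ℕ) + (t2.2.1.2 : ℕ) = μ2
          · rw [if_pos hc1, if_pos hc2, ← hb1.2, ← hb2.2,
              redCoeff_orth n hn i1 i2 hi t1.2.2.1 t1.2.2.2, zero_mul]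
          · rw [if_neg hc2, mul_zero, zero_mul]
        · rw [if_neg hc1, zero_mul, zero_mul]
    · -- primed internal indices mismatch: second factor vanishes
      rw [not_and_or] at hb2
      rw [hEb' _ _ _ _ _ _ hb2, mul_zero, mul_zero]
  · -- unprimed internal indices mismatch: first factor vanishes
    rw [not_and_or] at hb1
    rw [hEb _ _ _ _ _ _ hb1, zero_mul, mul_zero]
end

section
/- Let n ≥ 1 and let a and b be independent random polynomials in R_n, each with independent mean-zero coefficients, where every coefficient of a has variance V_a and every coefficient of b has variance V_b. Then for every 0 ≤ i ≤ n−1, Var((a·b)|_i) = n · V_a · V_b, where the product a·b is computed in R_n. -/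
open MeasureTheory ProbabilityTheory Polynomial
open scoped NNReal ENNReal

lemma polyOf_coeff (n : ℕ) (c : Fin n → ℝ) (m : ℕ) :
    (polyOf n c).coeff m = if h : m < n then c ⟨m, h⟩ else 0 := by
  unfold polyOf
  rw [Polynomial.finset_sum_coeff]
  simp only [Polynomial.coeff_C_mul, Polynomial.coeff_X_pow]
  by_cases h : m < n
  · rw [dif_pos h, Finset.sum_eq_single (⟨m, h⟩ : Fin n)]
    · simp
    · intro j _ hj
      rw [if_neg, mul_zero]
      intro hm; exact hj (Fin.ext hm.symm)
    · simp
  · rw [dif_neg h]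
    apply Finset.sum_eq_zero
    intro j _
    rw [if_neg, mul_zero]
    intro hm; exact h (hm ▸ j.isLt)

lemma polyOf_degree_lt (n : ℕ) (c : Fin n → ℝ) : (polyOf n c).degree < (n : WithBot ℕ) := by
  rw [Polynomial.degree_lt_iff_coeff_zero]
  intro m hm
  rw [polyOf_coeff, dif_neg (by omega)]

lemma redCoeff_mul (n : ℕ) (hn : 1 ≤ n) (c d : Fin n → ℝ) (i : Fin n) :
    redCoeff n (polyOf n c * polyOf n d) i
      = ∑ j : Fin n, (if (j : ℕ) ≤ (i : ℕ) then (1:ℝ) else -1) * (c j * d (i - j)) := by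
  set p : Polynomial ℝ := polyOf n c * polyOf n d with hp
  -- high coefficients vanish
  have hchigh : ∀ m, n ≤ m → (polyOf n c).coeff m = 0 := fun m hm => by
    rw [polyOf_coeff, dif_neg (by omega)]
  have hdhigh : ∀ m, n ≤ m → (polyOf n d).coeff m = 0 := fun m hm => by
    rw [polyOf_coeff, dif_neg (by omega)]
  have hphigh : ∀ m, 2 * n ≤ m → p.coeff m = 0 := by
    intro m hm
    rw [hp, Polynomial.coeff_mul]
    apply Finset.sum_eq_zero
    intro x hx
    rw [Finset.HasAntidiagonal.mem_antidiagonal] at hx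
    rcases le_or_gt n x.1 with h1 | h1
    · rw [hchigh _ h1, zero_mul]
    · rw [hdhigh _ (by omega), mul_zero]
  -- decomposition p = r + (X^n+1) * q
  set q : Polynomial ℝ := polyOf n (fun j => p.coeff ((j : ℕ) + n)) with hq
  set r : Polynomial ℝ := polyOf n (fun j => p.coeff (j : ℕ) - p.coeff ((j : ℕ) + n)) with hr
  have hmonic : (X ^ n + 1 : ℝ[X]).Monic := by
    have := Polynomial.monic_X_pow_add_C (R := ℝ) (a := 1) (Nat.one_le_iff_ne_zero.mp hn)
    simpa using this
  have hdeg1 : (X ^ n + 1 : ℝ[X]).degree = (n : WithBot ℕ) := by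
    have := Polynomial.degree_X_pow_add_C (R := ℝ) (Nat.lt_of_lt_of_le Nat.zero_lt_one hn) 1
    simpa using this
  have key : r + (X ^ n + 1) * q = p := by
    have hmul : (X ^ n + 1 : ℝ[X]) * q = q * X ^ n + q := by ring
    ext m
    rw [Polynomial.coeff_add, hmul, Polynomial.coeff_add, Polynomial.coeff_mul_X_pow']
    rcases lt_or_ge m n with h1 | h1
    · rw [if_neg (by omega)]
      rw [polyOf_coeff, polyOf_coeff, dif_pos h1, dif_pos h1]
      ring
    · rcases lt_or_ge m (2 * n) with h2 | h2
      · rw [if_pos h1]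
        rw [polyOf_coeff, polyOf_coeff, polyOf_coeff,
          dif_neg (by omega), dif_pos (show m - n < n by omega), dif_neg (by omega)]
        simp only [zero_add, add_zero]
        congr 1
        omega
      · rw [if_pos h1]
        rw [polyOf_coeff, polyOf_coeff, polyOf_coeff,
          dif_neg (by omega), dif_neg (show ¬ m - n < n by omega), dif_neg (by omega)]
        rw [hphigh m h2]
        simp
  have hmod : p %ₘ (X ^ n + 1) = r := by
    refine (Polynomial.div_modByMonic_unique q r hmonic ⟨key, ?_⟩).2
    rw [hdeg1]; exact polyOf_degree_lt n _
  rw [redCoeff, hmod, hr, polyOf_coeff, dif_pos i.isLt]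
  simp only [Fin.eta]
  -- now the combinatorial identity
  have hcoeff_i : p.coeff (i : ℕ) =
      ∑ x ∈ Finset.range ((i : ℕ) + 1), (polyOf n c).coeff x * (polyOf n d).coeff ((i : ℕ) - x) := by
    rw [hp, Polynomial.coeff_mul, Finset.Nat.sum_antidiagonal_eq_sum_range_succ_mk]
  have hcoeff_in : p.coeff ((i : ℕ) + n) =
      ∑ x ∈ Finset.Ico ((i : ℕ) + 1) n, (polyOf n c).coeff x * (polyOf n d).coeff ((i : ℕ) + n - x) := by
    rw [hp, Polynomial.coeff_mul, Finset.Nat.sum_antidiagonal_eq_sum_range_succ_mk]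
    rw [Finset.range_eq_Ico]
    rw [← Finset.sum_Ico_consecutive _ (Nat.zero_le ((i:ℕ)+1)) (by omega : (i:ℕ)+1 ≤ (i:ℕ)+n+1)]
    rw [← Finset.sum_Ico_consecutive (m := (i:ℕ)+1) (n := n) (k := (i:ℕ)+n+1) _ (by omega) (by omega)]
    have e1 : ∑ x ∈ Finset.Ico 0 ((i:ℕ)+1), (polyOf n c).coeff x * (polyOf n d).coeff ((i:ℕ)+n-x) = 0 := by
      apply Finset.sum_eq_zero
      intro x hx
      rw [Finset.mem_Ico] at hx
      rw [hdhigh _ (by omega), mul_zero]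
    have e2 : ∑ x ∈ Finset.Ico n ((i:ℕ)+n+1), (polyOf n c).coeff x * (polyOf n d).coeff ((i:ℕ)+n-x) = 0 := by
      apply Finset.sum_eq_zero
      intro x hx
      rw [Finset.mem_Ico] at hx
      rw [hchigh _ (by omega), zero_mul]
    rw [e1, e2, zero_add, add_zero]
  rw [hcoeff_i, hcoeff_in]
  -- RHS as a sum over range n
  have hrhs : ∑ j : Fin n, (if (j : ℕ) ≤ (i : ℕ) then (1:ℝ) else -1) * (c j * d (i - j))
      = ∑ x ∈ Finset.range n,
          (if x ≤ (i : ℕ) then (polyOf n c).coeff x * (polyOf n d).coeff ((i:ℕ) - x)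
           else -((polyOf n c).coeff x * (polyOf n d).coeff ((i:ℕ) + n - x))) := by
    rw [← Fin.sum_univ_eq_sum_range (fun x =>
          (if x ≤ (i : ℕ) then (polyOf n c).coeff x * (polyOf n d).coeff ((i:ℕ) - x)
           else -((polyOf n c).coeff x * (polyOf n d).coeff ((i:ℕ) + n - x)))) n]
    apply Finset.sum_congr rfl
    intro j _
    have hcj : (polyOf n c).coeff (j : ℕ) = c j := by
      rw [polyOf_coeff, dif_pos j.isLt]
    have hsub : ((i - j : Fin n) : ℕ) = if (j:ℕ) ≤ (i:ℕ) then (i:ℕ) - (j:ℕ) else (i:ℕ) + n - (j:ℕ) := by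
      rw [Fin.sub_def]
      simp only []
      split
      · next h =>
        have h1 : n - (j:ℕ) + (i:ℕ) = ((i:ℕ) - (j:ℕ)) + n := by
          have := j.isLt; omega
        rw [h1, Nat.add_mod_right, Nat.mod_eq_of_lt (by have := i.isLt; omega)]
      · next h =>
        have h2 : n - (j:ℕ) + (i:ℕ) = (i:ℕ) + n - (j:ℕ) := by
          have := j.isLt; omega
        rw [h2, Nat.mod_eq_of_lt (by have := j.isLt; omega)]
    have hdij : (polyOf n d).coeff (((i - j : Fin n)) : ℕ) = d (i - j) := by
      rw [polyOf_coeff, dif_pos (i - j).isLt]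
    rcases le_or_gt (j : ℕ) (i : ℕ) with h | h
    · rw [if_pos h, if_pos h, one_mul, hcj, ← hdij, hsub, if_pos h]
    · rw [if_neg (by omega), if_neg (by omega), hcj, ← hdij, hsub, if_neg (by omega)]
      ring
  rw [hrhs]
  have split := Finset.sum_Ico_consecutive (fun x =>
      (if x ≤ (i : ℕ) then (polyOf n c).coeff x * (polyOf n d).coeff ((i:ℕ) - x)
       else -((polyOf n c).coeff x * (polyOf n d).coeff ((i:ℕ) + n - x))))
      (Nat.zero_le ((i:ℕ)+1)) (show (i:ℕ)+1 ≤ n by have := i.isLt; omega)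
  rw [Finset.range_eq_Ico, Finset.range_eq_Ico, ← split]
  have e3 : ∑ x ∈ Finset.Ico 0 ((i:ℕ)+1),
      (if x ≤ (i : ℕ) then (polyOf n c).coeff x * (polyOf n d).coeff ((i:ℕ) - x)
       else -((polyOf n c).coeff x * (polyOf n d).coeff ((i:ℕ) + n - x)))
      = ∑ x ∈ Finset.range ((i:ℕ)+1), (polyOf n c).coeff x * (polyOf n d).coeff ((i:ℕ) - x) := by
    rw [Finset.range_eq_Ico]
    apply Finset.sum_congr rfl
    intro x hx
    rw [Finset.mem_Ico] at hx
    rw [if_pos (by omega)]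
  have e4 : ∑ x ∈ Finset.Ico ((i:ℕ)+1) n,
      (if x ≤ (i : ℕ) then (polyOf n c).coeff x * (polyOf n d).coeff ((i:ℕ) - x)
       else -((polyOf n c).coeff x * (polyOf n d).coeff ((i:ℕ) + n - x)))
      = -∑ x ∈ Finset.Ico ((i:ℕ)+1) n, (polyOf n c).coeff x * (polyOf n d).coeff ((i:ℕ) + n - x) := by
    rw [← Finset.sum_neg_distrib]
    apply Finset.sum_congr rfl
    intro x hx
    rw [Finset.mem_Ico] at hx
    rw [if_neg (by omega)]
  rw [e3, e4]
  rw [Finset.range_eq_Ico]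
  ring

theorem stmt12' {Ω : Type*} [MeasurableSpace Ω] (P : Measure Ω) [IsProbabilityMeasure P]
    (n : ℕ) (hn : 1 ≤ n) (Va Vb : ℝ)
    (a b : Fin n → Ω → ℝ)
    (hameas : ∀ j, Measurable (a j)) (hbmeas : ∀ j, Measurable (b j))
    (hab : IndepFun (fun ω (j : Fin n) => a j ω) (fun ω (j : Fin n) => b j ω) P)
    (haindep : iIndepFun a P)
    (hbindep : iIndepFun b P)
    (hamean : ∀ j, (∫ ω, a j ω ∂P) = 0) (hbmean : ∀ j, (∫ ω, b j ω ∂P) = 0)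
    (haL2 : ∀ j, MemLp (a j) 2 P) (hbL2 : ∀ j, MemLp (b j) 2 P)
    (havar : ∀ j, variance (a j) P = Va) (hbvar : ∀ j, variance (b j) P = Vb)
    (i : Fin n)
    (s : Fin n → ℝ) (hs : s = fun j : Fin n => if (j:ℕ) ≤ (i:ℕ) then (1:ℝ) else -1)
    (σ : Fin n → Fin n) (hσ : σ = fun j => i - j) :
    variance (fun ω => ∑ j : Fin n, s j * (a j ω * b (σ j) ω)) P = n * Va * Vb := by
  haveI : NeZero n := ⟨by omega⟩
  have hσinj : Function.Injective σ := by
    rw [hσ]; intro j k h; exact sub_right_injective h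
  -- independence facts
  have iab : ∀ j k : Fin n, IndepFun (a j) (b k) P := fun j k =>
    hab.comp (measurable_pi_apply j) (measurable_pi_apply k)
  have iaabb : ∀ j k u v : Fin n,
      IndepFun (fun ω => a j ω * a k ω) (fun ω => b u ω * b v ω) P := fun j k u v =>
    hab.comp ((measurable_pi_apply j).mul (measurable_pi_apply k))
      ((measurable_pi_apply u).mul (measurable_pi_apply v))
  have ia : ∀ j, Integrable (a j) P := fun j => (haL2 j).integrable one_le_two
  have ib : ∀ j, Integrable (b j) P := fun j => (hbL2 j).integrable one_le_two
  have iaa : ∀ j k, Integrable (fun ω => a j ω * a k ω) P := by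
    intro j k
    rcases eq_or_ne j k with rfl | h
    · simpa [pow_two] using (haL2 j).integrable_sq
    · exact (haindep.indepFun h).integrable_mul (ia j) (ia k)
  have ibb : ∀ j k, Integrable (fun ω => b j ω * b k ω) P := by
    intro j k
    rcases eq_or_ne j k with rfl | h
    · simpa [pow_two] using (hbL2 j).integrable_sq
    · exact (hbindep.indepFun h).integrable_mul (ib j) (ib k)
  -- second moments
  have Ea2 : ∀ j, (∫ ω, a j ω * a j ω ∂P) = Va := by
    intro j
    have h := variance_eq_sub (haL2 j)
    rw [havar j, hamean j] at h
    have h2 : (∫ x, (a j ^ 2) x ∂P) = ∫ ω, a j ω * a j ω ∂P :=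
      integral_congr_ae (Filter.Eventually.of_forall fun ω => by simp [pow_two])
    rw [h2] at h
    linarith
  have Eb2 : ∀ j, (∫ ω, b j ω * b j ω ∂P) = Vb := by
    intro j
    have h := variance_eq_sub (hbL2 j)
    rw [hbvar j, hbmean j] at h
    have h2 : (∫ x, (b j ^ 2) x ∂P) = ∫ ω, b j ω * b j ω ∂P :=
      integral_congr_ae (Filter.Eventually.of_forall fun ω => by simp [pow_two])
    rw [h2] at h
    linarith
  have Eaa0 : ∀ j k : Fin n, j ≠ k → (∫ ω, a j ω * a k ω ∂P) = 0 := by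
    intro j k h
    have h1 := (haindep.indepFun h).integral_mul_eq_mul_integral (ia j).1 (ia k).1
    have h2 : (fun ω => a j ω * a k ω) = a j * a k := rfl
    rw [h2, h1, hamean j, zero_mul]
  -- Memℒp of products
  have hmemab : ∀ j k : Fin n, MemLp (fun ω => a j ω * b k ω) 2 P := by
    intro j k
    have hm : AEStronglyMeasurable (fun ω => a j ω * b k ω) P :=
      ((hameas j).mul (hbmeas k)).aestronglyMeasurable
    rw [memLp_two_iff_integrable_sq hm]
    have hind : IndepFun (fun ω => a j ω ^ 2) (fun ω => b k ω ^ 2) P :=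
      (iab j k).comp (measurable_id.pow_const 2) (measurable_id.pow_const 2)
    have hint := hind.integrable_mul (haL2 j).integrable_sq (hbL2 k).integrable_sq
    have he : (fun ω => (a j ω * b k ω) ^ 2)
        = (fun ω => a j ω ^ 2) * fun ω => b k ω ^ 2 := by
      funext ω; simp [Pi.mul_apply]; ring
    rw [he]; exact hint
  have iT : ∀ j, Integrable (fun ω => s j * (a j ω * b (σ j) ω)) P := fun j =>
    (((hmemab j (σ j)).const_mul (s j)).integrable one_le_two)
  have hS2 : MemLp (fun ω => ∑ j : Fin n, s j * (a j ω * b (σ j) ω)) 2 P := by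
    have := memLp_finsetSum (μ := P) Finset.univ
      (f := fun (j : Fin n) ω => s j * (a j ω * b (σ j) ω))
      (fun j _ => (hmemab j (σ j)).const_mul (s j))
    exact this
  have ES : (∫ ω, ∑ j : Fin n, s j * (a j ω * b (σ j) ω) ∂P) = 0 := by
    rw [integral_finset_sum _ (fun j _ => iT j)]
    apply Finset.sum_eq_zero
    intro j _
    rw [integral_const_mul]
    have h2 : (fun ω => a j ω * b (σ j) ω) = a j * b (σ j) := rfl
    rw [h2, (iab j (σ j)).integral_mul_eq_mul_integral (ia j).1 (ib (σ j)).1, hamean j, zero_mul,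
      mul_zero]
  rw [variance_eq_sub hS2, ES]
  have hsq : ∀ ω, ((fun ω => ∑ j : Fin n, s j * (a j ω * b (σ j) ω)) ^ 2) ω
      = ∑ j : Fin n, ∑ k : Fin n,
          (s j * s k) * ((a j ω * a k ω) * (b (σ j) ω * b (σ k) ω)) := by
    intro ω
    simp only [Pi.pow_apply]
    rw [pow_two, Finset.sum_mul_sum]
    exact Finset.sum_congr rfl fun j _ => Finset.sum_congr rfl fun k _ => by ring
  have iTT : ∀ j k : Fin n,
      Integrable (fun ω => (s j * s k) * ((a j ω * a k ω) * (b (σ j) ω * b (σ k) ω))) P := by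
    intro j k
    apply Integrable.const_mul
    exact (iaabb j k (σ j) (σ k)).integrable_mul (iaa j k) (ibb (σ j) (σ k))
  have EI : (∫ ω, ((fun ω => ∑ j : Fin n, s j * (a j ω * b (σ j) ω)) ^ 2) ω ∂P)
      = ∑ j : Fin n, ∑ k : Fin n,
          (s j * s k) * ((∫ ω, a j ω * a k ω ∂P) * (∫ ω, b (σ j) ω * b (σ k) ω ∂P)) := by
    rw [integral_congr_ae (Filter.Eventually.of_forall hsq)]
    rw [integral_finset_sum _ (fun j _ => integrable_finset_sum _ (fun k _ => iTT j k))]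
    refine Finset.sum_congr rfl fun j _ => ?_
    rw [integral_finset_sum _ (fun k _ => iTT j k)]
    refine Finset.sum_congr rfl fun k _ => ?_
    rw [integral_const_mul]
    congr 1
    have h2 : (fun ω => (a j ω * a k ω) * (b (σ j) ω * b (σ k) ω))
        = (fun ω => a j ω * a k ω) * fun ω => b (σ j) ω * b (σ k) ω := rfl
    rw [h2, (iaabb j k (σ j) (σ k)).integral_mul_eq_mul_integral (iaa j k).1 (ibb (σ j) (σ k)).1]
  rw [EI]
  have diag : ∀ j : Fin n, (∑ k : Fin n,
      (s j * s k) * ((∫ ω, a j ω * a k ω ∂P) * (∫ ω, b (σ j) ω * b (σ k) ω ∂P))) = Va * Vb := by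
    intro j
    rw [Finset.sum_eq_single j]
    · have hss : s j * s j = 1 := by rw [hs]; dsimp only; split <;> norm_num
      rw [hss, one_mul, Ea2 j, Eb2 (σ j)]
    · intro k _ hkj
      rw [Eaa0 j k (fun h => hkj h.symm), zero_mul, mul_zero]
    · intro h; exact absurd (Finset.mem_univ j) h
  rw [Finset.sum_congr rfl fun j _ => diag j, Finset.sum_const, Finset.card_univ,
    Fintype.card_fin, nsmul_eq_mul]
  ring


/-- If `a` and `b` are independent random polynomials in `R_n` with
independent mean-zero coefficients of variances `V_a` and `V_b`, then every coefficient
of the product `a·b` (computed in `R_n`) has variance `n · V_a · V_b`. -/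
theorem stmt12 {Ω : Type*} [MeasurableSpace Ω] (P : Measure Ω) [IsProbabilityMeasure P]
    (n : ℕ) (hn : 1 ≤ n) (Va Vb : ℝ)
    (a b : Fin n → Ω → ℝ)
    (hameas : ∀ j, Measurable (a j)) (hbmeas : ∀ j, Measurable (b j))
    -- `a` and `b` are independent of each other
    (hab : IndepFun (fun ω (j : Fin n) => a j ω) (fun ω (j : Fin n) => b j ω) P)
    -- within each, the coefficients are independent, mean-zero, square-integrable
    (haindep : iIndepFun a P)
    (hbindep : iIndepFun b P)
    (hamean : ∀ j, (∫ ω, a j ω ∂P) = 0) (hbmean : ∀ j, (∫ ω, b j ω ∂P) = 0)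
    (haL2 : ∀ j, MemLp (a j) 2 P) (hbL2 : ∀ j, MemLp (b j) 2 P)
    (havar : ∀ j, variance (a j) P = Va) (hbvar : ∀ j, variance (b j) P = Vb)
    (i : Fin n) :
    variance (fun ω =>
        redCoeff n (polyOf n (fun j => a j ω) * polyOf n (fun j => b j ω)) i) P
      = n * Va * Vb := by
  have hfun : (fun ω =>
        redCoeff n (polyOf n (fun j => a j ω) * polyOf n (fun j => b j ω)) i)
      = fun ω => ∑ j : Fin n,
          (if (j : ℕ) ≤ (i : ℕ) then (1:ℝ) else -1) * (a j ω * b (i - j) ω) :=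
    funext fun ω => redCoeff_mul n hn _ _ i
  rw [hfun]
  exact stmt12' P n hn Va Vb a b hameas hbmeas hab haindep hbindep hamean hbmean
    haL2 hbL2 havar hbvar i _ rfl _ rfl
end
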